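/- Let m ≥ 2, k ≥ 2, and let y be a positive even integer with y < k and gcd(y, k) = 1. On a deck of m^k cards, the subgroup generated by the in and out m^y-shuffles equals the subgroup generated by the in m^2-shuffle and the out m-shuffle: ⟨I_{m^y}, O_{m^y}⟩ = ⟨I_{m^2}, O_m⟩ as subgroups of the symmetric group on the m^k card positions. -/

import Mathlib

namespace Shuffle17

lemma hsub (M t a : ℕ) (hM : 0 < M) (ha : a < M * t) :
    M * t - 1 - a = M * (t - 1 - a / M) + (M - 1 - a % M) := by
  have h1 : a % M < M := Nat.mod_lt _ hM
  have h2 : a / M < t := Nat.div_lt_of_lt_mul (by omega)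
  have h3 : M * (a / M) + a % M = a := Nat.div_add_mod a M
  have e1 : M * (t - 1 - a / M) = M * t - M - M * (a / M) := by
    rw [Nat.mul_sub, Nat.mul_sub, Nat.mul_one]
  have e2 : M * (a / M + 1) = M * (a / M) + M := by ring
  have e3 : M * (a / M + 1) ≤ M * t := Nat.mul_le_mul_left M (by omega)
  omega

/-- digit j of (m^y - 1 - q) for q < m^y, j < y is the complement digit. -/
lemma dig_compl (m y j q : ℕ) (hm : 1 ≤ m) (hq : q < m ^ y) (hj : j < y) :
    (m ^ y - 1 - q) / m ^ j % m = m - 1 - q / m ^ j % m := by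
  have hmj : 0 < m ^ j := Nat.pow_pos (by omega)
  have hsplit : m ^ y = m ^ j * m ^ (y - j) := by
    rw [← pow_add]; congr 1; omega
  have hq' : q < m ^ j * m ^ (y - j) := by rwa [← hsplit]
  rw [hsplit, hsub (m ^ j) (m ^ (y - j)) q hmj hq']
  rw [Nat.mul_add_div hmj,
    Nat.div_eq_of_lt (lt_of_le_of_lt (Nat.sub_le _ _) (Nat.sub_lt hmj one_pos)), Nat.add_zero]
  have hyj : m ^ (y - j) = m * m ^ (y - j - 1) := by
    rw [← pow_succ']; congr 1; omega
  have hd : q / m ^ j < m ^ (y - j) := Nat.div_lt_of_lt_mul hq'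
  rw [hyj, hsub m (m ^ (y - j - 1)) _ (by omega) (by rwa [← hyj])]
  rw [Nat.mul_add_mod]
  exact Nat.mod_eq_of_lt (by omega)

/-- low digit of m^y * s + q -/
lemma dig_low (m y j s q : ℕ) (hm : 1 ≤ m) (hq : q < m ^ y) (hj : j < y) :
    (m ^ y * s + q) / m ^ j % m = q / m ^ j % m := by
  have hmj : 0 < m ^ j := Nat.pow_pos (by omega)
  have hsplit : m ^ y = m ^ j * m ^ (y - j) := by rw [← pow_add]; congr 1; omega
  rw [hsplit, mul_assoc, Nat.mul_add_div hmj]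
  have hyj : m ^ (y - j) = m * m ^ (y - j - 1) := by rw [← pow_succ']; congr 1; omega
  rw [hyj]
  rw [show m * m ^ (y-j-1) * s + q / m ^ j = m * (m ^ (y-j-1) * s) + q / m ^ j by ring]
  rw [Nat.mul_add_mod]

/-- high digit of m^y * s + q -/
lemma dig_high (m y j s q : ℕ) (hm : 1 ≤ m) (hq : q < m ^ y) :
    (m ^ y * s + q) / m ^ (y + j) % m = s / m ^ j % m := by
  have hmy : 0 < m ^ y := Nat.pow_pos (by omega)
  rw [pow_add, ← Nat.div_div_eq_div_mul, Nat.mul_add_div hmy, Nat.div_eq_of_lt hq,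
    Nat.add_zero]

lemma dig_high' (m w j s q : ℕ) (hm : 1 ≤ m) (hq : q < m ^ w) (hwj : w ≤ j) :
    (m ^ w * s + q) / m ^ j % m = s / m ^ (j - w) % m := by
  conv_lhs => rw [show j = w + (j - w) by omega]
  exact dig_high m w (j - w) s q hm hq

/-- digits determine a number below m^K -/
lemma dig_inj (m : ℕ) (hm : 1 ≤ m) : ∀ (K a b : ℕ), a < m ^ K → b < m ^ K →
    (∀ j < K, a / m ^ j % m = b / m ^ j % m) → a = b := by
  intro K
  induction K with
  | zero => intro a b ha hb _; simp at ha hb; omega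
  | succ K ih =>
    intro a b ha hb h
    have h0 : a % m = b % m := by simpa using h 0 (by omega)
    have hdiv : a / m = b / m := by
      refine ih (a / m) (b / m) ?_ ?_ ?_
      · exact Nat.div_lt_of_lt_mul (by rw [← pow_succ']; exact ha)
      · exact Nat.div_lt_of_lt_mul (by rw [← pow_succ']; exact hb)
      · intro j hj
        have := h (j + 1) (by omega)
        rwa [pow_succ', ← Nat.div_div_eq_div_mul, ← Nat.div_div_eq_div_mul] at this
    calc a = m * (a / m) + a % m := (Nat.div_add_mod a m).symm
      _ = m * (b / m) + b % m := by rw [hdiv, h0]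
      _ = b := Nat.div_add_mod b m

/-- iterated out-shuffle formula -/
lemma opow (m k : ℕ) (hm : 2 ≤ m) (hk : 1 ≤ k) (O : Equiv.Perm (Fin (m ^ k)))
    (hO : ∀ i : Fin (m ^ k),
      (O i : ℕ) = m * ((i : ℕ) % m ^ (k - 1)) + (i : ℕ) / m ^ (k - 1)) :
    ∀ j ≤ k, ∀ x : Fin (m ^ k),
      ((O ^ j) x : ℕ) = m ^ j * ((x : ℕ) % m ^ (k - j)) + (x : ℕ) / m ^ (k - j) := by
  intro j
  induction j with
  | zero =>
    intro _ x
    simp [Nat.mod_eq_of_lt x.isLt, Nat.div_eq_of_lt x.isLt]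
  | succ j ih =>
    intro hjk x
    have hjk' : j ≤ k := by omega
    have hOjx := ih hjk' x
    have hstep : ((O ^ (j + 1)) x : ℕ) = m * (((O ^ j) x : ℕ) % m ^ (k - 1))
        + ((O ^ j) x : ℕ) / m ^ (k - 1) := by
      rw [pow_succ', Equiv.Perm.mul_apply]; exact hO _
    set u := (x : ℕ) % m ^ (k - j) with hu
    set v := (x : ℕ) / m ^ (k - j) with hvdef
    have hukj : 0 < m ^ (k - j - 1) := Nat.pow_pos (by omega)
    have hkj : m ^ (k - j) = m ^ (k - j - 1) * m := by rw [← pow_succ]; congr 1; omega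
    have hu_lt : u < m ^ (k - j) := Nat.mod_lt _ (Nat.pow_pos (by omega))
    have hv_lt : v < m ^ j := by
      apply Nat.div_lt_of_lt_mul
      have : m ^ (k - j) * m ^ j = m ^ k := by rw [← pow_add]; congr 1; omega
      rw [this]; exact x.isLt
    set a := u / m ^ (k - j - 1) with hadef
    set b := u % m ^ (k - j - 1) with hbdef
    have hb_lt : b < m ^ (k - j - 1) := Nat.mod_lt _ hukj
    have ha_lt : a < m := by
      apply Nat.div_lt_of_lt_mul; rwa [← hkj]
    have hunfold : m ^ (k - j - 1) * a + b = u := Nat.div_add_mod u (m ^ (k - j - 1))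
    have hk1 : m ^ (k - 1) = m ^ j * m ^ (k - j - 1) := by rw [← pow_add]; congr 1; omega
    have key1 : m ^ j * u + v = m ^ (k - 1) * a + (m ^ j * b + v) := by
      rw [hk1, ← hunfold]; ring
    have bound : m ^ j * b + v < m ^ (k - 1) := by
      have h1 : m ^ j * (b + 1) ≤ m ^ j * m ^ (k - j - 1) :=
        Nat.mul_le_mul_left _ (by omega)
      have h2 : m ^ j * (b + 1) = m ^ j * b + m ^ j := by ring
      omega
    have hmod : (m ^ j * u + v) % m ^ (k - 1) = m ^ j * b + v := by
      rw [key1, Nat.mul_add_mod, Nat.mod_eq_of_lt bound]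
    have hdiv : (m ^ j * u + v) / m ^ (k - 1) = a := by
      rw [key1, Nat.mul_add_div (Nat.pow_pos (by omega)),
        Nat.div_eq_of_lt bound, Nat.add_zero]
    have tgt1 : (x : ℕ) % m ^ (k - (j + 1)) = b := by
      have hdvd : m ^ (k - j - 1) ∣ m ^ (k - j) := pow_dvd_pow m (by omega)
      have : (x : ℕ) % m ^ (k - j - 1) = u % m ^ (k - j - 1) :=
        (Nat.mod_mod_of_dvd _ hdvd).symm
      rw [show k - (j + 1) = k - j - 1 by omega, this]
    have tgt2 : (x : ℕ) / m ^ (k - (j + 1)) = m * v + a := by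
      have hx : (x : ℕ) = m ^ (k - j - 1) * (m * v + a) + b := by
        have hxx : m ^ (k - j) * v + u = (x : ℕ) := Nat.div_add_mod _ _
        rw [← hxx, ← hunfold, hkj]; ring
      rw [show k - (j + 1) = k - j - 1 by omega, hx,
        Nat.mul_add_div hukj, Nat.div_eq_of_lt hb_lt, Nat.add_zero]
    rw [hstep, hOjx, hmod, hdiv, tgt1, tgt2]
    ring

/-- A permutation acts by complementing the digits selected by the mask `c`. -/
def DigMask (m k : ℕ) (c : ZMod k → Bool) (P : Equiv.Perm (Fin (m ^ k))) : Prop :=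
  ∀ x : Fin (m ^ k), ∀ j < k,
    ((P x : ℕ) / m ^ j % m) =
      if c (j : ZMod k) then m - 1 - ((x : ℕ) / m ^ j % m) else (x : ℕ) / m ^ j % m

lemma digmask_congr {m k : ℕ} {c c' : ZMod k → Bool} {P : Equiv.Perm (Fin (m ^ k))}
    (h : ∀ i, c i = c' i) (hP : DigMask m k c P) : DigMask m k c' P := by
  intro x j hj; rw [← h]; exact hP x j hj

lemma digmask_one (m k : ℕ) : DigMask m k (fun _ => false) 1 := by
  intro x j hj; simp

lemma digmask_unique (m k : ℕ) (hm : 1 ≤ m) {c : ZMod k → Bool}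
    {P Q : Equiv.Perm (Fin (m ^ k))}
    (hP : DigMask m k c P) (hQ : DigMask m k c Q) : P = Q := by
  apply Equiv.ext; intro x; apply Fin.ext
  exact dig_inj m hm k _ _ (P x).isLt (Q x).isLt
    (fun j hj => by rw [hP x j hj, hQ x j hj])

lemma digmask_mul (m k : ℕ) (hm : 1 ≤ m) {c d : ZMod k → Bool}
    {P Q : Equiv.Perm (Fin (m ^ k))}
    (hP : DigMask m k c P) (hQ : DigMask m k d Q) :
    DigMask m k (fun i => xor (c i) (d i)) (P * Q) := by
  intro x j hj
  have h2 : (x : ℕ) / m ^ j % m < m := Nat.mod_lt _ (by omega)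
  rw [Equiv.Perm.mul_apply, hP (Q x) j hj, hQ x j hj]
  cases hc : c (j : ZMod k) <;> cases hd : d (j : ZMod k) <;>
    simp only [hc, hd, Bool.xor_false, Bool.xor_true, Bool.false_xor, Bool.true_xor,
      Bool.not_true, Bool.not_false, if_true, if_false, Bool.false_eq_true,
      Bool.true_eq_false, ite_true, ite_false] <;>
    omega

/-- action of the out shuffle on digits -/
lemma digO (m k : ℕ) (hm : 2 ≤ m) (hk : 1 ≤ k) (O : Equiv.Perm (Fin (m ^ k)))
    (hO : ∀ i : Fin (m ^ k),
      (O i : ℕ) = m * ((i : ℕ) % m ^ (k - 1)) + (i : ℕ) / m ^ (k - 1))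
    (x : Fin (m ^ k)) (j : ℕ) (hj : j < k) :
    (O x : ℕ) / m ^ ((j + 1) % k) % m = (x : ℕ) / m ^ j % m := by
  set u := (x : ℕ) % m ^ (k - 1) with hu
  set v := (x : ℕ) / m ^ (k - 1) with hv
  have hu_lt : u < m ^ (k - 1) := Nat.mod_lt _ (Nat.pow_pos (by omega))
  have hv_lt : v < m := by
    apply Nat.div_lt_of_lt_mul
    have : m ^ (k - 1) * m = m ^ k := by rw [← pow_succ]; congr 1; omega
    rw [this]; exact x.isLt
  have hOx : (O x : ℕ) = m * u + v := hO x
  by_cases hj1 : j = k - 1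
  · have : (j + 1) % k = 0 := by
      rw [hj1, show k - 1 + 1 = k by omega, Nat.mod_self]
    rw [this, hOx, pow_zero, Nat.div_one, Nat.mul_add_mod, Nat.mod_eq_of_lt hv_lt, hj1]
    rw [← hv, Nat.mod_eq_of_lt hv_lt]
  · have hjk1 : j < k - 1 := by omega
    have : (j + 1) % k = j + 1 := Nat.mod_eq_of_lt (by omega)
    rw [this, hOx, pow_succ', ← Nat.div_div_eq_div_mul,
      Nat.mul_add_div (by omega), Nat.div_eq_of_lt hv_lt, Nat.add_zero]
    have hxarr : m ^ (k - 1) * v + u = (x : ℕ) := Nat.div_add_mod _ _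
    rw [← hxarr, dig_low m (k - 1) j v u (by omega) hu_lt hjk1]

lemma digmask_conj (m k : ℕ) (hm : 2 ≤ m) (hk : 1 ≤ k) (O : Equiv.Perm (Fin (m ^ k)))
    (hO : ∀ i : Fin (m ^ k),
      (O i : ℕ) = m * ((i : ℕ) % m ^ (k - 1)) + (i : ℕ) / m ^ (k - 1))
    {c : ZMod k → Bool} {P : Equiv.Perm (Fin (m ^ k))} (hP : DigMask m k c P) :
    DigMask m k (fun i => c (i + 1)) (O⁻¹ * P * O) := by
  intro x j hj
  have h1 : (j + 1) % k < k := Nat.mod_lt _ (by omega)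
  have hPP := hP (O x) ((j + 1) % k) h1
  have hw : O ((O⁻¹ * P * O) x) = P (O x) := by
    simp [Equiv.Perm.mul_apply]
  have lhs := digO m k hm hk O hO ((O⁻¹ * P * O) x) j hj
  rw [hw, hPP, digO m k hm hk O hO x j hj] at lhs
  rw [← lhs]
  have hcast : (((j + 1) % k : ℕ) : ZMod k) = (j : ZMod k) + 1 := by
    rw [ZMod.natCast_mod]; push_cast; ring
  rw [hcast]

lemma digmask_conj_pow (m k : ℕ) (hm : 2 ≤ m) (hk : 1 ≤ k) (O : Equiv.Perm (Fin (m ^ k)))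
    (hO : ∀ i : Fin (m ^ k),
      (O i : ℕ) = m * ((i : ℕ) % m ^ (k - 1)) + (i : ℕ) / m ^ (k - 1))
    {c : ZMod k → Bool} {P : Equiv.Perm (Fin (m ^ k))} (hP : DigMask m k c P) (a : ℕ) :
    DigMask m k (fun i => c (i + (a : ZMod k))) ((O ^ a)⁻¹ * P * O ^ a) := by
  induction a with
  | zero =>
    simp only [pow_zero, inv_one, one_mul, mul_one, Nat.cast_zero, add_zero]
    exact hP
  | succ a ih =>
    have step := digmask_conj m k hm hk O hO ih
    have e : O⁻¹ * ((O ^ a)⁻¹ * P * O ^ a) * O = (O ^ (a + 1))⁻¹ * P * O ^ (a + 1) := by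
      rw [pow_succ, mul_inv_rev]; group
    rw [e] at step
    exact digmask_congr (fun i => congrArg c (by push_cast; ring)) step

/-- mask of `B * A⁻¹` when `A` is the out and `B` the in w-shuffle -/
lemma digmask_window (m k w : ℕ) (hm : 2 ≤ m) (hw : 0 < w) (hwk : w ≤ k)
    (A B : Equiv.Perm (Fin (m ^ k)))
    (hA : ∀ x : Fin (m ^ k),
      (A x : ℕ) = m ^ w * ((x : ℕ) % m ^ (k - w)) + (x : ℕ) / m ^ (k - w))
    (hB : ∀ x : Fin (m ^ k),
      (B x : ℕ) = m ^ w * ((x : ℕ) % m ^ (k - w)) + (m ^ w - 1 - (x : ℕ) / m ^ (k - w))) :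
    DigMask m k (fun i => decide (i.val < w)) (B * A⁻¹) := by
  haveI : NeZero k := ⟨by omega⟩
  intro x j hj
  set z := A⁻¹ x with hz
  have hmul : ((B * A⁻¹) x : ℕ) = (B z : ℕ) := rfl
  set s := (z : ℕ) % m ^ (k - w) with hs
  set q := (z : ℕ) / m ^ (k - w) with hqdef
  have hq : q < m ^ w := by
    apply Nat.div_lt_of_lt_mul
    have : m ^ (k - w) * m ^ w = m ^ k := by rw [← pow_add]; congr 1; omega
    rw [this]; exact z.isLt
  have hwpos : 0 < m ^ w := Nat.pow_pos (by omega)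
  have hq' : m ^ w - 1 - q < m ^ w :=
    lt_of_le_of_lt (Nat.sub_le _ _) (Nat.sub_lt hwpos one_pos)
  have hxv : (x : ℕ) = m ^ w * s + q := by
    have : A z = x := A.apply_symm_apply x
    rw [← this, hA z]
  have hcast : ((j : ZMod k)).val = j := by
    rw [ZMod.val_natCast]; exact Nat.mod_eq_of_lt hj
  by_cases hjw : j < w
  · rw [hmul, hB z, hxv,
      dig_low m w j s _ (by omega) hq' hjw, dig_low m w j s q (by omega) hq hjw,
      dig_compl m w j q (by omega) hq hjw]
    simp [hcast, hjw]
  · rw [hmul, hB z, hxv,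
      dig_high' m w j s _ (by omega) hq' (by omega), dig_high' m w j s q (by omega) hq (by omega)]
    simp [hcast, hjw]

lemma xor_decide_eq (p q : Prop) [Decidable p] [Decidable q] :
    (decide p ^^ decide q) = decide ¬(p ↔ q) := by
  by_cases hp : p <;> by_cases hq : q <;> simp [hp, hq]

/-- xor of two consecutive shifted windows is a pair -/
lemma win_xor (k w : ℕ) (hk : 2 ≤ k) (hw : 0 < w) (hwk : w < k) (j : ZMod k) :
    xor (decide (j.val < w)) (decide ((j + 1).val < w))
      = xor (decide (j = ((w - 1 : ℕ) : ZMod k))) (decide (j = ((k - 1 : ℕ) : ZMod k))) := by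
  haveI : NeZero k := ⟨by omega⟩
  haveI : Fact (1 < k) := ⟨by omega⟩
  have hv : j.val < k := ZMod.val_lt j
  have hadd : (j + 1).val = (j.val + 1) % k := by rw [ZMod.val_add, ZMod.val_one]
  have h1 : (j = ((w - 1 : ℕ) : ZMod k)) ↔ j.val = w - 1 := by
    constructor
    · intro h; rw [h, ZMod.val_natCast]; exact Nat.mod_eq_of_lt (by omega)
    · intro h
      apply ZMod.val_injective
      rw [ZMod.val_natCast, Nat.mod_eq_of_lt (by omega), h]
  have h2 : (j = ((k - 1 : ℕ) : ZMod k)) ↔ j.val = k - 1 := by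
    constructor
    · intro h; rw [h, ZMod.val_natCast]; exact Nat.mod_eq_of_lt (by omega)
    · intro h
      apply ZMod.val_injective
      rw [ZMod.val_natCast, Nat.mod_eq_of_lt (by omega), h]
  by_cases hjk : j.val = k - 1
  · have e0 : (j.val + 1) % k = 0 := by
      rw [hjk, show k - 1 + 1 = k by omega, Nat.mod_self]
    rw [hadd, e0, xor_decide_eq, xor_decide_eq, decide_eq_decide, h1, h2]
    omega
  · have e0 : (j.val + 1) % k = j.val + 1 := Nat.mod_eq_of_lt (by omega)
    rw [hadd, e0, xor_decide_eq, xor_decide_eq, decide_eq_decide, h1, h2]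
    omega

/-- the pair construction: from a window of length `w` and the rotation `O`,
conjugation and multiplication give any pair at distance `w`. -/
lemma pair_mem (m k w : ℕ) (hm : 2 ≤ m) (hk : 2 ≤ k) (hw : 0 < w) (hwk : w < k)
    (O : Equiv.Perm (Fin (m ^ k)))
    (hO : ∀ i : Fin (m ^ k),
      (O i : ℕ) = m * ((i : ℕ) % m ^ (k - 1)) + (i : ℕ) / m ^ (k - 1))
    (G : Subgroup (Equiv.Perm (Fin (m ^ k)))) (hOG : O ∈ G)
    (P0 : Equiv.Perm (Fin (m ^ k))) (hP0G : P0 ∈ G)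
    (hP0 : DigMask m k (fun i => decide (i.val < w)) P0) (u : ZMod k) :
    ∃ P ∈ G, DigMask m k
      (fun i => xor (decide (i = u)) (decide (i = u + (w : ZMod k)))) P := by
  haveI : NeZero k := ⟨by omega⟩
  set a : ℕ := ((((k - 1 : ℕ)) : ZMod k) - u).val with ha
  have haz : (a : ZMod k) = (((k - 1 : ℕ)) : ZMod k) - u := ZMod.natCast_rightInverse _
  have hW1 := digmask_conj_pow m k hm (by omega) O hO hP0 a
  have hW2 := digmask_conj_pow m k hm (by omega) O hO hP0 (a + 1)
  have mem1 : (O ^ a)⁻¹ * P0 * O ^ a ∈ G :=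
    mul_mem (mul_mem (inv_mem (pow_mem hOG a)) hP0G) (pow_mem hOG a)
  have mem2 : (O ^ (a + 1))⁻¹ * P0 * O ^ (a + 1) ∈ G :=
    mul_mem (mul_mem (inv_mem (pow_mem hOG (a + 1))) hP0G) (pow_mem hOG (a + 1))
  have hprod := digmask_mul m k (by omega) hW1 hW2
  refine ⟨_, mul_mem mem1 mem2, digmask_congr (fun i => ?_) hprod⟩
  have e1 : (((a + 1 : ℕ)) : ZMod k) = (a : ZMod k) + 1 := by push_cast; ring
  have hwx := win_xor k w hk hw hwk (i + (a : ZMod k))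
  rw [e1, ← add_assoc, hwx]
  have ek : ((k - 1 : ℕ) : ZMod k) = -1 := by
    rw [Nat.cast_sub (by omega)]; simp
  have ew : ((w - 1 : ℕ) : ZMod k) = (w : ZMod k) - 1 := by
    rw [Nat.cast_sub (by omega)]; simp
  have h1 : (i + (a : ZMod k) = ((k - 1 : ℕ) : ZMod k)) ↔ i = u := by
    rw [haz]; constructor <;> intro h <;> linear_combination h
  have h2 : (i + (a : ZMod k) = ((w - 1 : ℕ) : ZMod k)) ↔ i = u + (w : ZMod k) := by
    rw [haz, ew, ek]; constructor <;> intro h <;> linear_combination h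
  rw [decide_eq_decide.mpr h1, decide_eq_decide.mpr h2, Bool.xor_comm]

/-- chains of pairs: pairs at any multiple of the distance `w` -/
lemma chain_pairs (m k w : ℕ) (hm : 2 ≤ m) (hk : 2 ≤ k)
    (G : Subgroup (Equiv.Perm (Fin (m ^ k))))
    (hpair : ∀ u : ZMod k, ∃ P ∈ G, DigMask m k
      (fun i => xor (decide (i = u)) (decide (i = u + (w : ZMod k)))) P)
    (u : ZMod k) (s : ℕ) :
    ∃ P ∈ G, DigMask m k
      (fun i => xor (decide (i = u)) (decide (i = u + ((s * w : ℕ) : ZMod k)))) P := by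
  induction s with
  | zero =>
    refine ⟨1, one_mem G, digmask_congr (fun i => ?_) (digmask_one m k)⟩
    simp
  | succ s ih =>
    obtain ⟨P, hPG, hPmask⟩ := ih
    obtain ⟨Q, hQG, hQmask⟩ := hpair (u + ((s * w : ℕ) : ZMod k))
    refine ⟨P * Q, mul_mem hPG hQG,
      digmask_congr (fun i => ?_) (digmask_mul m k (by omega) hPmask hQmask)⟩
    have e : u + ((s * w : ℕ) : ZMod k) + (w : ZMod k) = u + (((s + 1) * w : ℕ) : ZMod k) := by
      push_cast; ring
    rw [e]
    set b1 := decide (i = u)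
    set b2 := decide (i = u + ((s * w : ℕ) : ZMod k))
    set b3 := decide (i = u + (((s + 1) * w : ℕ) : ZMod k))
    cases hb1 : b1 <;> cases hb2 : b2 <;> cases hb3 : b3 <;> rfl

/-- key boolean identity to grow an even window -/
lemma step_bool (k s : ℕ) (hk : 2 ≤ k) (hs : s + 2 ≤ k) (i : ZMod k) :
    xor (decide (i.val < s))
      (xor (decide (i = (s : ZMod k))) (decide (i = ((s + 1 : ℕ) : ZMod k))))
      = decide (i.val < s + 2) := by
  haveI : NeZero k := ⟨by omega⟩
  have hv : i.val < k := ZMod.val_lt i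
  have h1 : (i = (s : ZMod k)) ↔ i.val = s := by
    constructor
    · intro h; rw [h, ZMod.val_natCast]; exact Nat.mod_eq_of_lt (by omega)
    · intro h; apply ZMod.val_injective; rw [ZMod.val_natCast, Nat.mod_eq_of_lt (by omega), h]
  have h2 : (i = ((s + 1 : ℕ) : ZMod k)) ↔ i.val = s + 1 := by
    constructor
    · intro h; rw [h, ZMod.val_natCast]; exact Nat.mod_eq_of_lt (by omega)
    · intro h; apply ZMod.val_injective; rw [ZMod.val_natCast, Nat.mod_eq_of_lt (by omega), h]
  rw [xor_decide_eq, xor_decide_eq, decide_eq_decide, h1, h2]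
  omega

/-- existence of inverse mod k -/
lemma exists_inv (w k : ℕ) (h : Nat.gcd w k = 1) (hk : 2 ≤ k) :
    ∃ t : ℕ, (t * w) % k = 1 := by
  haveI : NeZero k := ⟨by omega⟩
  haveI : Fact (1 < k) := ⟨by omega⟩
  set u := ZMod.unitOfCoprime w h
  refine ⟨((u⁻¹ : (ZMod k)ˣ) : ZMod k).val, ?_⟩
  have h1 : (((((u⁻¹ : (ZMod k)ˣ) : ZMod k).val * w : ℕ)) : ZMod k) = 1 := by
    push_cast
    rw [ZMod.natCast_rightInverse]
    have : ((w : ℕ) : ZMod k) = (u : ZMod k) := by simp [u, ZMod.coe_unitOfCoprime]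
    rw [this, ← Units.val_mul, inv_mul_cancel, Units.val_one]
  have := congrArg ZMod.val h1
  rwa [ZMod.val_natCast, ZMod.val_one] at this

end Shuffle17

open Shuffle17 in
/-- For `m ≥ 2`, `k ≥ 2` and `y` a positive even integer with `y < k` and
`gcd(y, k) = 1`, on a deck of `m^k` cards the subgroup generated by the in and out
`m^y`-shuffles (cut into `m^y` stacks of `m^(k−y)` cards) equals the subgroup generated by
the in `m^2`-shuffle and the out `m`-shuffle. -/
theorem shuffle_group_even_reduction (m k y : ℕ) (hm : 2 ≤ m) (hk : 2 ≤ k)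
    (hy0 : 0 < y) (hyeven : Even y) (hyk : y < k) (hgcd : Nat.gcd y k = 1)
    (O I2 Oy Iy : Equiv.Perm (Fin (m ^ k)))
    (hO : ∀ i : Fin (m ^ k),
      (O i : ℕ) = m * ((i : ℕ) % m ^ (k - 1)) + (i : ℕ) / m ^ (k - 1))
    (hI2 : ∀ i : Fin (m ^ k),
      (I2 i : ℕ) = m ^ 2 * ((i : ℕ) % m ^ (k - 2)) + (m ^ 2 - 1 - (i : ℕ) / m ^ (k - 2)))
    (hOy : ∀ i : Fin (m ^ k),
      (Oy i : ℕ) = m ^ y * ((i : ℕ) % m ^ (k - y)) + (i : ℕ) / m ^ (k - y))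
    (hIy : ∀ i : Fin (m ^ k),
      (Iy i : ℕ) = m ^ y * ((i : ℕ) % m ^ (k - y)) + (m ^ y - 1 - (i : ℕ) / m ^ (k - y))) :
    Subgroup.closure {Iy, Oy} = Subgroup.closure {I2, O} := by
  haveI : NeZero k := ⟨by omega⟩
  have hy2 : 2 ≤ y := by obtain ⟨c, hc⟩ := hyeven; omega
  have hk3 : 3 ≤ k := by omega
  have hkodd : Nat.gcd 2 k = 1 := by
    rcases Nat.even_or_odd k with he | ho
    · exfalso
      obtain ⟨c, hc⟩ := hyeven
      obtain ⟨d, hd⟩ := he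
      have : 2 ∣ Nat.gcd y k := Nat.dvd_gcd ⟨c, by omega⟩ ⟨d, by omega⟩
      omega
    · exact Nat.coprime_two_left.mpr ho
  have hopow := opow m k hm (by omega) O hO
  -- Oy = O ^ y
  have hOyO : Oy = O ^ y := by
    apply Equiv.ext; intro x; apply Fin.ext
    rw [hOy x, hopow y (le_of_lt hyk) x]
  -- O ^ k = 1
  have hOk : O ^ k = 1 := by
    apply Equiv.ext; intro x; apply Fin.ext
    rw [hopow k le_rfl x]
    simp [Nat.mod_one]
  -- power identities
  have hpow_mod : ∀ n : ℕ, O ^ n = O ^ (n % k) := by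
    intro n
    conv_lhs => rw [← Nat.div_add_mod n k]
    rw [pow_add, pow_mul, hOk, one_pow, one_mul]
  -- masks of the two "complement" elements
  have hmaskF : DigMask m k (fun i => decide (i.val < y)) (Iy * Oy⁻¹) :=
    digmask_window m k y hm (by omega) (le_of_lt hyk) Oy Iy hOy hIy
  have hO2 : ∀ x : Fin (m ^ k),
      ((O ^ 2) x : ℕ) = m ^ 2 * ((x : ℕ) % m ^ (k - 2)) + (x : ℕ) / m ^ (k - 2) :=
    fun x => hopow 2 (by omega) x
  have hmaskF2 : DigMask m k (fun i => decide (i.val < 2)) (I2 * (O ^ 2)⁻¹) :=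
    digmask_window m k 2 hm (by omega) (by omega) (O ^ 2) I2 hO2 hI2
  set H := Subgroup.closure ({Iy, Oy} : Set (Equiv.Perm (Fin (m ^ k)))) with hH
  set K := Subgroup.closure ({I2, O} : Set (Equiv.Perm (Fin (m ^ k)))) with hK
  have hIyH : Iy ∈ H := Subgroup.subset_closure (by simp)
  have hOyH : Oy ∈ H := Subgroup.subset_closure (by simp)
  have hI2K : I2 ∈ K := Subgroup.subset_closure (by simp)
  have hOK : O ∈ K := Subgroup.subset_closure (by simp)
  obtain ⟨t, ht⟩ := exists_inv y k hgcd hk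
  have htcast : ((t * y : ℕ) : ZMod k) = ((1 : ℕ) : ZMod k) := by
    rw [← ZMod.natCast_mod, ht]
  -- O ∈ H
  have hOH : O ∈ H := by
    have : O = Oy ^ t := by
      rw [hOyO, ← pow_mul, hpow_mod (y * t), show (y * t) % k = 1 by rw [Nat.mul_comm]; exact ht,
        pow_one]
    rw [this]; exact pow_mem hOyH t
  -- I2 ∈ H
  have hI2H : I2 ∈ H := by
    have hFH : Iy * Oy⁻¹ ∈ H := mul_mem hIyH (inv_mem hOyH)
    have hpair := fun u => pair_mem m k y hm hk hy0 hyk O hO H hOH _ hFH hmaskF u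
    obtain ⟨P1, hP1H, hP1mask⟩ := chain_pairs m k y hm hk H hpair 0 t
    have key : P1 = I2 * (O ^ 2)⁻¹ := by
      refine digmask_unique m k (by omega) (digmask_congr (fun i => ?_) hP1mask) hmaskF2
      rw [htcast]
      have := step_bool k 0 hk (by omega) i
      simp only [Nat.cast_zero, zero_add, Nat.cast_one] at this ⊢
      rw [← this]
      simp
    have : I2 = P1 * O ^ 2 := by rw [key]; group
    rw [this]
    exact mul_mem hP1H (pow_mem hOH 2)
  -- Oy ∈ K
  have hOyK : Oy ∈ K := by rw [hOyO]; exact pow_mem hOK y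
  -- Iy ∈ K
  have hIyK : Iy ∈ K := by
    have hF2K : I2 * (O ^ 2)⁻¹ ∈ K := mul_mem hI2K (inv_mem (pow_mem hOK 2))
    have hpair2 := fun u => pair_mem m k 2 hm hk (by omega) (by omega) O hO K hOK _ hF2K hmaskF2 u
    obtain ⟨t2, ht2⟩ := exists_inv 2 k hkodd hk
    have ht2cast : ((t2 * 2 : ℕ) : ZMod k) = ((1 : ℕ) : ZMod k) := by
      rw [← ZMod.natCast_mod, ht2]
    -- adjacent pairs
    have hadj : ∀ v : ZMod k, ∃ P ∈ K, DigMask m k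
        (fun i => xor (decide (i = v)) (decide (i = v + ((1 : ℕ) : ZMod k)))) P := by
      intro v
      obtain ⟨P, hPK, hPmask⟩ := chain_pairs m k 2 hm hk K hpair2 v t2
      exact ⟨P, hPK, digmask_congr (fun i => by rw [ht2cast]) hPmask⟩
    -- growing windows
    have hchain2 : ∀ s : ℕ, 2 * s ≤ y → ∃ P ∈ K, DigMask m k
        (fun i => decide (i.val < 2 * s)) P := by
      intro s
      induction s with
      | zero =>
        intro _
        exact ⟨1, one_mem K, digmask_congr (fun i => by simp) (digmask_one m k)⟩
      | succ s ih =>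
        intro hs
        obtain ⟨P, hPK, hPmask⟩ := ih (by omega)
        obtain ⟨Q, hQK, hQmask⟩ := hadj ((2 * s : ℕ) : ZMod k)
        refine ⟨P * Q, mul_mem hPK hQK,
          digmask_congr (fun i => ?_) (digmask_mul m k (by omega) hPmask hQmask)⟩
        have e1 : ((2 * s : ℕ) : ZMod k) + ((1 : ℕ) : ZMod k) = ((2 * s + 1 : ℕ) : ZMod k) := by
          push_cast; ring
        rw [e1]
        have hsb := step_bool k (2 * s) hk (by omega) i
        rw [show 2 * s + 2 = 2 * (s + 1) by ring] at hsb
        exact hsb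
    obtain ⟨c, hc⟩ := hyeven
    obtain ⟨P2, hP2K, hP2mask⟩ := hchain2 c (by omega)
    have key : P2 = Iy * Oy⁻¹ := by
      refine digmask_unique m k (by omega) (digmask_congr (fun i => ?_) hP2mask) hmaskF
      rw [show 2 * c = y by omega]
    have : Iy = P2 * Oy := by rw [key]; group
    rw [this]
    exact mul_mem hP2K hOyK
  -- conclude
  apply le_antisymm
  · rw [hH, Subgroup.closure_le]
    intro P hP
    simp only [Set.mem_insert_iff, Set.mem_singleton_iff] at hP
    rcases hP with rfl | rfl
    · exact hIyK
    · exact hOyK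
  · rw [hK, Subgroup.closure_le]
    intro P hP
    simp only [Set.mem_insert_iff, Set.mem_singleton_iff] at hP
    rcases hP with rfl | rfl
    · exact hI2H
    · exact hOH
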